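/- Let (M, dist) be a nonempty metric space equipped with a Borel measure m, and let f, g : [0,∞) → [0,∞) be nonincreasing functions. Then for all x, x' ∈ M, ∫_M f(dist(x,y))·g(dist(x',y)) dm(y) ≤ 2·sup_{z∈M} ∫_M f(dist(z,y))·g(dist(z,y)) dm(y), where both sides are interpreted as Lebesgue integrals with values in [0,∞] and the supremum is taken in [0,∞]. -/
import Mathlib


open MeasureTheory

/-- The two-center reduction inside Lemma 3.6 of the paper: a product of
nonincreasing radial kernels with two different centers is dominated by twice
the supremum over single-center products. -/
theorem two_center_reduction {M : Type*} [MetricSpace M] [Nonempty M]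
    [MeasurableSpace M] [BorelSpace M] (m : Measure M)
    (f g : ℝ → ℝ) (hf_nonneg : ∀ s, 0 ≤ f s) (hg_nonneg : ∀ s, 0 ≤ g s)
    (hf : AntitoneOn f (Set.Ici 0)) (hg : AntitoneOn g (Set.Ici 0)) :
    ∀ x x' : M,
      ∫⁻ y, ENNReal.ofReal (f (dist x y) * g (dist x' y)) ∂m
        ≤ 2 * ⨆ z : M, ∫⁻ y, ENNReal.ofReal (f (dist z y) * g (dist z y)) ∂m := by
  intro x x'
  set S := ⨆ z : M, ∫⁻ y, ENNReal.ofReal (f (dist z y) * g (dist z y)) ∂m with hS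
  set A : Set M := {y | dist x y ≤ dist x' y} with hA
  have hAmeas : MeasurableSet A :=
    measurableSet_le (continuous_const.dist continuous_id).measurable
      (continuous_const.dist continuous_id).measurable
  have h1 : ∫⁻ y in A, ENNReal.ofReal (f (dist x y) * g (dist x' y)) ∂m ≤ S := by
    calc ∫⁻ y in A, ENNReal.ofReal (f (dist x y) * g (dist x' y)) ∂m
        ≤ ∫⁻ y in A, ENNReal.ofReal (f (dist x y) * g (dist x y)) ∂m := by
          apply lintegral_mono_ae
          rw [ae_restrict_iff' hAmeas]
          filter_upwards with y hy
          apply ENNReal.ofReal_le_ofReal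
          exact mul_le_mul_of_nonneg_left
            (hg dist_nonneg dist_nonneg hy) (hf_nonneg _)
      _ ≤ ∫⁻ y, ENNReal.ofReal (f (dist x y) * g (dist x y)) ∂m :=
          setLIntegral_le_lintegral _ _
      _ ≤ S := le_iSup (fun z => ∫⁻ y, ENNReal.ofReal (f (dist z y) * g (dist z y)) ∂m) x
  have h2 : ∫⁻ y in Aᶜ, ENNReal.ofReal (f (dist x y) * g (dist x' y)) ∂m ≤ S := by
    calc ∫⁻ y in Aᶜ, ENNReal.ofReal (f (dist x y) * g (dist x' y)) ∂m
        ≤ ∫⁻ y in Aᶜ, ENNReal.ofReal (f (dist x' y) * g (dist x' y)) ∂m := by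
          apply lintegral_mono_ae
          rw [ae_restrict_iff' hAmeas.compl]
          filter_upwards with y hy
          apply ENNReal.ofReal_le_ofReal
          have : dist x' y ≤ dist x y := le_of_lt (lt_of_not_ge hy)
          exact mul_le_mul_of_nonneg_right
            (hf dist_nonneg dist_nonneg this) (hg_nonneg _)
      _ ≤ ∫⁻ y, ENNReal.ofReal (f (dist x' y) * g (dist x' y)) ∂m :=
          setLIntegral_le_lintegral _ _
      _ ≤ S := le_iSup (fun z => ∫⁻ y, ENNReal.ofReal (f (dist z y) * g (dist z y)) ∂m) x'
  calc ∫⁻ y, ENNReal.ofReal (f (dist x y) * g (dist x' y)) ∂m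
      = ∫⁻ y in A, ENNReal.ofReal (f (dist x y) * g (dist x' y)) ∂m
        + ∫⁻ y in Aᶜ, ENNReal.ofReal (f (dist x y) * g (dist x' y)) ∂m :=
        (lintegral_add_compl _ hAmeas).symm
    _ ≤ S + S := add_le_add h1 h2
    _ = 2 * S := (two_mul S).symm
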